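/- In the goal-oriented setting, with the dual norms induced by a symmetric positive definite matrix G*, for every n ∈ {1, …, N} one has | lᵀ eⁿ − Δt·∑_{k=0}^{n−1} (r^{k+1})ᵀ Ψ̃^{N−n+k} | ≤ ( ∑_{k=0}^{n−1} Δt·‖r^{k+1}‖₋₁² )^{1/2} · ( ∑_{k=0}^{n−1} Δt·‖ε^{N−n+k}‖²_{G*} )^{1/2}. -/

import Mathlib

open Matrix BigOperators Finset

/-- The energy norm `‖v‖_{G*} = √(vᵀ G* v)` induced by a matrix `G`. -/
noncomputable def normG {d : ℕ} (G : Matrix (Fin d) (Fin d) ℝ) (v : Fin d → ℝ) : ℝ :=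
  Real.sqrt (v ⬝ᵥ G.mulVec v)

/-- The dual norm `‖r‖₋₁ = sup_{v ≠ 0} (rᵀ v)/‖v‖_{G*}`. -/
noncomputable def dualNorm {d : ℕ} (G : Matrix (Fin d) (Fin d) ℝ) (r : Fin d → ℝ) : ℝ :=
  ⨆ v : {v : Fin d → ℝ // v ≠ 0}, (r ⬝ᵥ (v : Fin d → ℝ)) / normG G (v : Fin d → ℝ)

/-- The symmetric part `(A + Aᵀ)/2` of a matrix. -/
noncomputable def symPart {d : ℕ} (A : Matrix (Fin d) (Fin d) ℝ) : Matrix (Fin d) (Fin d) ℝ :=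
  ((1 : ℝ)/2) • (A + Aᵀ)

lemma normG_nonneg {d : ℕ} (G : Matrix (Fin d) (Fin d) ℝ) (v : Fin d → ℝ) :
    0 ≤ normG G v := Real.sqrt_nonneg _

lemma dot_mulVec_symm {d : ℕ} (B : Matrix (Fin d) (Fin d) ℝ) (x y : Fin d → ℝ) :
    x ⬝ᵥ B.mulVec y = (Bᵀ.mulVec x) ⬝ᵥ y := by
  rw [mulVec_transpose, ← dotProduct_mulVec]

open scoped MatrixOrder in
/-- Cauchy–Schwarz for the inner product induced by a PSD matrix. -/
lemma cs_G {d : ℕ} {G : Matrix (Fin d) (Fin d) ℝ} (hG : G.PosSemidef) (u v : Fin d → ℝ) :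
    u ⬝ᵥ G.mulVec v ≤ normG G u * normG G v := by
  set B := CFC.sqrt G with hB
  have hBB : B * B = G := CFC.sqrt_mul_sqrt_self G hG.nonneg
  have hBsym : Bᵀ = B := by simpa using (CFC.sqrt_nonneg G).posSemidef.1.eq
  have key : ∀ x y : Fin d → ℝ, x ⬝ᵥ G.mulVec y = (B.mulVec x) ⬝ᵥ (B.mulVec y) := by
    intro x y
    rw [← hBB, ← mulVec_mulVec, dot_mulVec_symm, hBsym]
  rw [key]
  have h1 : normG G u = Real.sqrt (∑ i, (B.mulVec u) i ^ 2) := by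
    rw [normG, key]; congr 1; simp [dotProduct, pow_two]
  have h2 : normG G v = Real.sqrt (∑ i, (B.mulVec v) i ^ 2) := by
    rw [normG, key]; congr 1; simp [dotProduct, pow_two]
  rw [h1, h2]
  exact Real.sum_mul_le_sqrt_mul_sqrt Finset.univ _ _

lemma normG_pos {d : ℕ} {G : Matrix (Fin d) (Fin d) ℝ} (hG : G.PosDef)
    {v : Fin d → ℝ} (hv : v ≠ 0) : 0 < normG G v := by
  have : 0 < v ⬝ᵥ G.mulVec v := by simpa using hG.dotProduct_mulVec_pos hv
  exact Real.sqrt_pos.2 this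

lemma normG_neg {d : ℕ} (G : Matrix (Fin d) (Fin d) ℝ) (v : Fin d → ℝ) :
    normG G (-v) = normG G v := by
  simp [normG, mulVec_neg, dotProduct_neg, neg_dotProduct]

/-- The sup defining the dual norm is bounded above. -/
lemma dualNorm_bddAbove {d : ℕ} {G : Matrix (Fin d) (Fin d) ℝ} (hG : G.PosDef)
    (r : Fin d → ℝ) :
    BddAbove (Set.range fun v : {v : Fin d → ℝ // v ≠ 0} =>
      (r ⬝ᵥ (v : Fin d → ℝ)) / normG G (v : Fin d → ℝ)) := by
  have hdet : IsUnit G.det := isUnit_iff_ne_zero.2 hG.det_pos.ne'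
  set w : Fin d → ℝ := G⁻¹.mulVec r with hw
  have hGw : G.mulVec w = r := by
    rw [hw, mulVec_mulVec, Matrix.mul_nonsing_inv _ hdet, one_mulVec]
  refine ⟨normG G w, ?_⟩
  rintro x ⟨⟨v, hv⟩, rfl⟩
  have hpos := normG_pos hG hv
  rw [div_le_iff₀ hpos]
  have hGT : Gᵀ = G := by simpa using hG.1.eq
  calc r ⬝ᵥ v = w ⬝ᵥ G.mulVec v := by
        rw [← hGw, dot_mulVec_symm, hGT]
    _ ≤ normG G w * normG G v := cs_G hG.posSemidef w v

lemma dot_le_dualNorm {d : ℕ} (hd : 1 ≤ d) {G : Matrix (Fin d) (Fin d) ℝ} (hG : G.PosDef)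
    (r v : Fin d → ℝ) : r ⬝ᵥ v ≤ dualNorm G r * normG G v := by
  have hbdd := dualNorm_bddAbove hG r
  have hle : ∀ u : Fin d → ℝ, u ≠ 0 → (r ⬝ᵥ u) / normG G u ≤ dualNorm G r := by
    intro u hu
    exact le_ciSup hbdd (⟨u, hu⟩ : {v : Fin d → ℝ // v ≠ 0})
  rcases eq_or_ne v 0 with rfl | hv
  · simp [normG]
  · have := hle v hv
    rw [div_le_iff₀ (normG_pos hG hv)] at this
    exact this

lemma abs_dot_le_dualNorm {d : ℕ} (hd : 1 ≤ d) {G : Matrix (Fin d) (Fin d) ℝ} (hG : G.PosDef)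
    (r v : Fin d → ℝ) : |r ⬝ᵥ v| ≤ dualNorm G r * normG G v := by
  rw [abs_le]
  constructor
  · have := dot_le_dualNorm hd hG r (-v)
    rw [dotProduct_neg, normG_neg] at this
    linarith
  · exact dot_le_dualNorm hd hG r v

theorem stmt14 {d : ℕ} (hd : 1 ≤ d)
    (G M A : Matrix (Fin d) (Fin d) ℝ) (hG : G.PosDef) (hM : M.PosSemidef)
    (Δt : ℝ) (hΔt : 0 < Δt) (N : ℕ) (hN : 1 ≤ N)
    (e r : ℕ → Fin d → ℝ) (he0 : e 0 = 0)
    (hprimal : ∀ k, 1 ≤ k → k ≤ N →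
      (M + Δt • A).mulVec (e k) = M.mulVec (e (k - 1)) - Δt • r k)
    (l : Fin d → ℝ)
    (Ψ Ψt : ℕ → Fin d → ℝ)
    (hΨN : M.mulVec (Ψ N) = -l)
    (hΨ : ∀ k, k < N → (M + Δt • Aᵀ).mulVec (Ψ k) = M.mulVec (Ψ (k + 1)))
    (hΨtN : Ψt N = Ψ N)
    (ε ϱ : ℕ → Fin d → ℝ)
    (hε : ∀ k, ε k = Ψ k - Ψt k)
    (hϱ : ∀ k, k < N →
      ϱ k = (1 / Δt) • ((M + Δt • Aᵀ).mulVec (Ψt k) - M.mulVec (Ψt (k + 1))))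
    (n : ℕ) (hn1 : 1 ≤ n) (hnN : n ≤ N) :
    |l ⬝ᵥ e n - Δt * ∑ k ∈ Finset.range n, r (k + 1) ⬝ᵥ Ψt (N - n + k)| ≤
      Real.sqrt (∑ k ∈ Finset.range n, Δt * (dualNorm G (r (k + 1)))^2) *
        Real.sqrt (∑ k ∈ Finset.range n, Δt * (normG G (ε (N - n + k)))^2) := by
  have hMT : Mᵀ = M := by simpa using hM.1.eq
  -- error representation: l ⬝ᵥ e n = Δt * ∑ r(k+1) ⬝ᵥ Ψ(N-n+k)
  set F : ℕ → ℝ := fun k => Ψ (N - n + k) ⬝ᵥ M.mulVec (e k) with hF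
  have hstep : ∀ k, k < n →
      F (k + 1) - F k = -(Δt * (r (k + 1) ⬝ᵥ Ψ (N - n + k))) := by
    intro k hk
    have hm : N - n + k < N := by omega
    have hmk : N - n + k + 1 = N - n + (k + 1) := by omega
    have hdual := hΨ (N - n + k) hm
    have hpr := hprimal (k + 1) (Nat.le_add_left 1 k) (by omega)
    simp only [Nat.add_sub_cancel] at hpr
    have key : Ψ (N - n + k) ⬝ᵥ (M + Δt • A).mulVec (e (k + 1)) = F (k + 1) := by
      rw [dot_mulVec_symm, transpose_add, transpose_smul, hMT, hdual, hmk]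
      simp only [hF]
      rw [dot_mulVec_symm M, hMT]
    rw [← key, hpr]
    simp only [hF]
    rw [dotProduct_sub, dotProduct_smul]
    rw [dotProduct_comm (Ψ (N - n + k)) (r (k+1))]
    simp only [smul_eq_mul]
    ring
  have htel : F n - F 0 = ∑ k ∈ Finset.range n, (F (k + 1) - F k) :=
    (Finset.sum_range_sub F n).symm
  have hF0 : F 0 = 0 := by simp [hF, he0]
  have hFn : F n = -(l ⬝ᵥ e n) := by
    simp only [hF]
    have h : N - n + n = N := by omega
    rw [h, dot_mulVec_symm, hMT, hΨN]
    simp [neg_dotProduct]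
  have hrep : l ⬝ᵥ e n = Δt * ∑ k ∈ Finset.range n, r (k + 1) ⬝ᵥ Ψ (N - n + k) := by
    have := htel
    rw [hF0, hFn, Finset.sum_congr rfl (fun k hk => hstep k (Finset.mem_range.1 hk))] at this
    rw [Finset.sum_neg_distrib, ← Finset.mul_sum] at this
    linarith [this]
  -- reduce to the dual reduction errors
  have hdiff : l ⬝ᵥ e n - Δt * ∑ k ∈ Finset.range n, r (k + 1) ⬝ᵥ Ψt (N - n + k)
      = Δt * ∑ k ∈ Finset.range n, r (k + 1) ⬝ᵥ ε (N - n + k) := by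
    rw [hrep, ← mul_sub, ← Finset.sum_sub_distrib]
    congr 1
    refine Finset.sum_congr rfl fun k _ => ?_
    rw [hε, dotProduct_sub]
  rw [hdiff, abs_mul, abs_of_pos hΔt]
  -- pointwise bound and Cauchy–Schwarz
  calc Δt * |∑ k ∈ Finset.range n, r (k + 1) ⬝ᵥ ε (N - n + k)|
      ≤ Δt * ∑ k ∈ Finset.range n, dualNorm G (r (k + 1)) * normG G (ε (N - n + k)) := by
        refine mul_le_mul_of_nonneg_left ?_ hΔt.le
        refine (Finset.abs_sum_le_sum_abs _ _).trans ?_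
        exact Finset.sum_le_sum fun k _ => abs_dot_le_dualNorm hd hG _ _
    _ = ∑ k ∈ Finset.range n,
          (Real.sqrt Δt * dualNorm G (r (k + 1))) * (Real.sqrt Δt * normG G (ε (N - n + k))) := by
        rw [Finset.mul_sum]
        refine Finset.sum_congr rfl fun k _ => ?_
        rw [show (Real.sqrt Δt * dualNorm G (r (k + 1))) *
            (Real.sqrt Δt * normG G (ε (N - n + k)))
            = (Real.sqrt Δt * Real.sqrt Δt) *
              (dualNorm G (r (k + 1)) * normG G (ε (N - n + k))) from by ring,
          Real.mul_self_sqrt hΔt.le]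
    _ ≤ Real.sqrt (∑ k ∈ Finset.range n, (Real.sqrt Δt * dualNorm G (r (k + 1)))^2) *
          Real.sqrt (∑ k ∈ Finset.range n, (Real.sqrt Δt * normG G (ε (N - n + k)))^2) :=
        Real.sum_mul_le_sqrt_mul_sqrt _ _ _
    _ = Real.sqrt (∑ k ∈ Finset.range n, Δt * (dualNorm G (r (k + 1)))^2) *
          Real.sqrt (∑ k ∈ Finset.range n, Δt * (normG G (ε (N - n + k)))^2) := by
        congr 2 <;> exact Finset.sum_congr rfl fun k _ => by
          rw [mul_pow, Real.sq_sqrt hΔt.le]
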